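/- In the chord graph G_n with d = ⌊n/2⌋, a vertex corresponding to a chord at cyclic distance i (2 ≤ i ≤ d, and if n is even assume i < d) has degree i(i−1) + 2(i−1)(d−i) when n = 2d+1 is odd. -/
import Mathlib


/-- Degree formula in the chord graph `G_n` for odd `n = 2d+1`: the number of
chords of the `n`-cycle crossing a fixed chord of cyclic distance `i`
(`2 ≤ i ≤ d`) equals `i(i−1) + 2(i−1)(d−i)`.  We take the fixed chord to be
`{0, i}`; a chord `{a,b}` with `a < b` crosses it iff exactly one endpoint lies
strictly between `0` and `i`, i.e. `0 < a < i < b`. -/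
theorem stmt_2 (d i : ℕ) (hd : 1 ≤ d) (hi : 2 ≤ i) (hid : i ≤ d) :
    ((Finset.univ : Finset (Fin (2 * d + 1) × Fin (2 * d + 1))).filter
      (fun p =>
        -- p is a chord: endpoints ordered and at cyclic distance ≥ 2
        p.1.val < p.2.val ∧
        2 ≤ min (p.2.val - p.1.val) ((2 * d + 1) - (p.2.val - p.1.val)) ∧
        -- p crosses the fixed chord {0, i}
        0 < p.1.val ∧ p.1.val < i ∧ i < p.2.val)).card
      = i * (i - 1) + 2 * (i - 1) * (d - i) := by
  have hin : i < 2 * d + 1 := by omega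
  have hset : ((Finset.univ : Finset (Fin (2 * d + 1) × Fin (2 * d + 1))).filter
      (fun p =>
        p.1.val < p.2.val ∧
        2 ≤ min (p.2.val - p.1.val) ((2 * d + 1) - (p.2.val - p.1.val)) ∧
        0 < p.1.val ∧ p.1.val < i ∧ i < p.2.val))
      = (Finset.Ioo (0 : Fin (2 * d + 1)) ⟨i, hin⟩) ×ˢ
        (Finset.Ioi (⟨i, hin⟩ : Fin (2 * d + 1))) := by
    ext ⟨⟨a, ha⟩, ⟨b, hb⟩⟩
    simp only [Finset.mem_filter, Finset.mem_univ, true_and, Finset.mem_product,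
      Finset.mem_Ioo, Finset.mem_Ioi, Fin.lt_def, Fin.val_zero]
    omega
  rw [hset, Finset.card_product, Fin.card_Ioo, Fin.card_Ioi]
  simp only [Fin.val_zero]
  obtain ⟨j, rfl⟩ : ∃ j, i = j + 1 := ⟨i - 1, by omega⟩
  obtain ⟨k, rfl⟩ : ∃ k, d = j + 1 + k := ⟨d - (j + 1), by omega⟩
  simp only [Nat.add_sub_cancel, Nat.sub_zero]
  have h2 : 2 * (j + 1 + k) - (j + 1) = j + 1 + 2 * k := by omega
  have h3 : j + 1 + k - (j + 1) = k := by omega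
  rw [h2, h3]
  ring
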